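/- arXiv:1511.00750 — 11 statements merged into one kernel-verified Lean document; each statement's English description precedes it below -/
import Mathlib

section
/- The ratio of segmented to average quality market efficiency satisfies 1 ≤ (∑_{k=1}^K w_k · max_{1≤i≤N} q_{i,k}) / (max_{1≤i≤N} ∑_{k=1}^K w_k · q_{i,k}) ≤ K, provided the denominator is positive. -/
open Finset

def finUnivNe {n : ℕ} (h : 0 < n) : (Finset.univ : Finset (Fin n)).Nonempty :=
  Finset.univ_nonempty_iff.mpr (Fin.pos_iff_nonempty.mp h)

/-- The ratio of the asymptotic efficiency of the segmented quality ranking to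
that of the average quality ranking lies between `1` and `K`. -/
theorem segmentation_ratio_bounds
    (N K : ℕ) (hN : 0 < N) (hK : 0 < K)
    (w : Fin K → ℝ) (hw : ∀ k, 0 ≤ w k)
    (q : Fin N → Fin K → ℝ) (hq : ∀ i k, 0 ≤ q i k)
    (hden : 0 < Finset.univ.sup' (finUnivNe hN) (fun i => ∑ k : Fin K, w k * q i k)) :
    1 ≤ (∑ k : Fin K, w k * Finset.univ.sup' (finUnivNe hN) (fun i => q i k)) /
          (Finset.univ.sup' (finUnivNe hN) (fun i => ∑ k : Fin K, w k * q i k))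
    ∧ (∑ k : Fin K, w k * Finset.univ.sup' (finUnivNe hN) (fun i => q i k)) /
          (Finset.univ.sup' (finUnivNe hN) (fun i => ∑ k : Fin K, w k * q i k)) ≤ (K : ℝ) := by

  set D := Finset.univ.sup' (finUnivNe hN) (fun i => ∑ k : Fin K, w k * q i k) with hD
  have hle : D ≤ ∑ k : Fin K, w k * Finset.univ.sup' (finUnivNe hN) (fun i => q i k) := by
    apply Finset.sup'_le
    intro i _
    apply Finset.sum_le_sum
    intro k _
    exact mul_le_mul_of_nonneg_left (Finset.le_sup' (fun i => q i k) (Finset.mem_univ i)) (hw k)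
  have hub : ∑ k : Fin K, w k * Finset.univ.sup' (finUnivNe hN) (fun i => q i k) ≤ K * D := by
    calc ∑ k : Fin K, w k * Finset.univ.sup' (finUnivNe hN) (fun i => q i k)
        ≤ ∑ _k : Fin K, D := by
          apply Finset.sum_le_sum
          intro k _
          obtain ⟨i, _, hi⟩ := Finset.exists_mem_eq_sup' (finUnivNe hN) (fun i => q i k)
          rw [hi]
          calc w k * q i k ≤ ∑ k' : Fin K, w k' * q i k' := by
                apply Finset.single_le_sum (fun k' _ => mul_nonneg (hw k') (hq i k')) (Finset.mem_univ k)
            _ ≤ D := Finset.le_sup' (fun i => ∑ k' : Fin K, w k' * q i k') (Finset.mem_univ i)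
      _ = K * D := by simp [mul_comm]
  constructor
  · rw [le_div_iff₀ hden]; simpa using hle
  · rw [div_le_iff₀ hden]; exact hub
end

section
/- The upper bound K in the segmentation benefit ratio is tight: for every K ≥ 1 and every ε > 0 there exist nonnegative weights w : Fin K → ℝ summing to 1 with all w_k > 0, and qualities q : Fin K → Fin K → ℝ with entries in [0,1], such that (∑_k w_k max_i q_{i,k}) / (max_i ∑_k w_k q_{i,k}) > K − ε. -/
open Finset

/-- Tightness of the upper bound `K` in the segmentation benefit ratio:
for every `K ≥ 1` and `ε > 0` there are positive weights summing to one and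
qualities in `[0,1]` whose ratio exceeds `K - ε`. -/
theorem segmentation_ratio_upper_bound_tight
    (K : ℕ) (hK : 1 ≤ K) (ε : ℝ) (hε : 0 < ε) :
    ∃ (w : Fin K → ℝ) (q : Fin K → Fin K → ℝ),
      (∀ k, 0 < w k) ∧ (∑ k : Fin K, w k = 1) ∧
      (∀ i k, 0 ≤ q i k ∧ q i k ≤ 1) ∧
      (∑ k : Fin K, w k * Finset.univ.sup' (finUnivNe (by omega)) (fun i => q i k)) /
          (Finset.univ.sup' (finUnivNe (by omega : 0 < K)) (fun i => ∑ k : Fin K, w k * q i k))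
        > (K : ℝ) - ε := by
  have hK0 : (0 : ℝ) < K := by exact_mod_cast hK
  refine ⟨fun _ => 1 / K, fun i k => if i = k then 1 else 0, ?_, ?_, ?_, ?_⟩
  · intro k; positivity
  · simp [Finset.card_univ, Finset.sum_const]
    field_simp
  · intro i k; by_cases h : i = k <;> simp [h]
  · have hsup1 : ∀ k : Fin K,
        Finset.univ.sup' (finUnivNe (by omega)) (fun i => if i = k then (1 : ℝ) else 0) = 1 := by
      intro k
      apply le_antisymm
      · apply Finset.sup'_le
        intro i _
        by_cases h : i = k <;> simp [h]
      · have := Finset.le_sup' (f := fun i => if i = k then (1 : ℝ) else 0)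
          (Finset.mem_univ k)
        exact le_trans (by simp) this
    have hsum : ∀ i : Fin K,
        (∑ k : Fin K, (1 / (K : ℝ)) * if i = k then (1 : ℝ) else 0) = 1 / K := by
      intro i
      rw [Finset.sum_eq_single i]
      · simp
      · intro b _ hb; simp [Ne.symm hb]
      · simp
    have hnum : (∑ k : Fin K, (1 / (K : ℝ)) *
        Finset.univ.sup' (finUnivNe (by omega)) (fun i => if i = k then (1 : ℝ) else 0)) = 1 := by
      simp only [hsup1, mul_one]
      simp [Finset.card_univ]
      field_simp
    have hden : Finset.univ.sup' (finUnivNe (by omega : 0 < K))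
        (fun i => ∑ k : Fin K, (1 / (K : ℝ)) * if i = k then (1 : ℝ) else 0) = 1 / K := by
      rw [show (fun i => ∑ k : Fin K, (1 / (K : ℝ)) * if i = k then (1 : ℝ) else 0)
          = fun _ => (1 / K : ℝ) from funext hsum]
      exact Finset.sup'_const _ _
    rw [hnum, hden]
    rw [one_div_one_div]
    linarith
end

section
/- For the diagonal quality construction, with equal weights w_k = 1/K and quality matrix q_{i,k} = δ_{ik}·(1 − ε·(1 − δ_{i1})) (i.e., q_{1,1} = 1, q_{k,k} = 1 − ε for k ≠ 1, zero off-diagonal), the ratio (∑_k w_k max_i q_{i,k})/(max_i ∑_k w_k q_{i,k}) equals K − ε(K − 1), and hence tends to K as ε → 0. -/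
open Finset Filter Topology

/-- For the diagonal quality construction with equal weights `w k = 1/K` and
`q i k = δ_{ik}(1 - ε(1 - δ_{i1}))`, the segmentation benefit ratio equals
`K - ε(K-1)`, and hence tends to `K` as `ε → 0`. -/
theorem diagonal_construction_ratio
    (K : ℕ) (hK : 0 < K) (ε : ℝ) (hε0 : 0 < ε) (hε1 : ε < 1)
    (w : Fin K → ℝ) (hw : ∀ k, w k = 1 / (K : ℝ))
    (q : Fin K → Fin K → ℝ)
    (hq : ∀ i k, q i k =
      if i = k then 1 - ε * (if (i : ℕ) = 0 then 0 else 1) else 0) :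
    (∑ k : Fin K, w k * Finset.univ.sup' (finUnivNe hK) (fun i => q i k)) /
        (Finset.univ.sup' (finUnivNe hK) (fun i => ∑ k : Fin K, w k * q i k))
      = (K : ℝ) - ε * ((K : ℝ) - 1)
    ∧ Tendsto (fun e : ℝ => (K : ℝ) - e * ((K : ℝ) - 1)) (𝓝 0) (𝓝 (K : ℝ)) := by
  have hKR : (0:ℝ) < (K:ℝ) := by exact_mod_cast hK
  have hdiag : ∀ k : Fin K,
      (if (k:ℕ) = 0 then (0:ℝ) else 1) ≤ 1 ∧ (0:ℝ) ≤ (if (k:ℕ) = 0 then (0:ℝ) else 1) := by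
    intro k; split <;> norm_num
  -- column suprema
  have hsupcol : ∀ k : Fin K,
      Finset.univ.sup' (finUnivNe hK) (fun i => q i k)
        = 1 - ε * (if (k:ℕ) = 0 then 0 else 1) := by
    intro k
    apply le_antisymm
    · apply Finset.sup'_le
      intro i _
      rw [hq i k]
      by_cases h : i = k
      · subst h; simp
      · simp only [h, if_false]
        nlinarith [(hdiag k).1, (hdiag k).2]
    · have := Finset.le_sup' (fun i => q i k) (Finset.mem_univ k)
      rw [hq k k] at this
      simpa [-Finset.le_sup'_iff] using this
  -- row sums
  have hrow : ∀ i : Fin K,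
      (∑ k : Fin K, w k * q i k)
        = (1 / (K:ℝ)) * (1 - ε * (if (i:ℕ) = 0 then 0 else 1)) := by
    intro i
    rw [Finset.sum_eq_single i]
    · rw [hw i, hq i i]; simp
    · intro k _ hki
      rw [hq i k]
      simp [Ne.symm hki]
    · intro h; exact absurd (Finset.mem_univ i) h
  -- denominator sup = 1/K
  have hzero : ((⟨0, hK⟩ : Fin K) : ℕ) = 0 := rfl
  have hdenom : Finset.univ.sup' (finUnivNe hK) (fun i => ∑ k : Fin K, w k * q i k)
      = 1 / (K:ℝ) := by
    apply le_antisymm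
    · apply Finset.sup'_le
      intro i _
      rw [hrow i]
      have h1 : (0:ℝ) < 1 / (K:ℝ) := by positivity
      nlinarith [(hdiag i).2, mul_nonneg hε0.le (hdiag i).2, mul_nonneg h1.le (mul_nonneg hε0.le (hdiag i).2)]
    · have := Finset.le_sup' (fun i => ∑ k : Fin K, w k * q i k)
        (Finset.mem_univ (⟨0, hK⟩ : Fin K))
      rw [hrow ⟨0, hK⟩] at this
      simpa [hzero, -Finset.le_sup'_iff] using this
  -- numerator
  have hnum : (∑ k : Fin K, w k * Finset.univ.sup' (finUnivNe hK) (fun i => q i k))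
      = (1 / (K:ℝ)) * ((K:ℝ) - ε * ((K:ℝ) - 1)) := by
    have hsum1 : (∑ k : Fin K, (if (k:ℕ) = 0 then (1:ℝ) else 0)) = 1 := by
      rw [Finset.sum_congr rfl (fun k _ => ?_), Finset.sum_ite_eq' Finset.univ (⟨0, hK⟩ : Fin K) (fun _ => (1:ℝ))]
      · simp
      · congr 1
        simp [Fin.ext_iff]
    calc (∑ k : Fin K, w k * Finset.univ.sup' (finUnivNe hK) (fun i => q i k))
        = ∑ k : Fin K, (1 / (K:ℝ)) * (1 - ε * (if (k:ℕ) = 0 then 0 else 1)) := by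
          refine Finset.sum_congr rfl (fun k _ => ?_); rw [hw k, hsupcol k]
      _ = (1 / (K:ℝ)) * ∑ k : Fin K, (1 - ε * (if (k:ℕ) = 0 then 0 else 1)) := by
          rw [Finset.mul_sum]
      _ = (1 / (K:ℝ)) * ((K:ℝ) - ε * ((K:ℝ) - 1)) := by
          congr 1
          have : ∀ k : Fin K, (1 - ε * (if (k:ℕ) = 0 then (0:ℝ) else 1))
              = (1 - ε) + ε * (if (k:ℕ) = 0 then (1:ℝ) else 0) := by
            intro k; split <;> ring
          rw [Finset.sum_congr rfl (fun k _ => this k), Finset.sum_add_distrib,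
            ← Finset.mul_sum, hsum1]
          simp [Fin.sum_const]
          ring
  constructor
  · rw [hnum, hdenom]
    field_simp
  · have h : Tendsto (fun e : ℝ => e * ((K:ℝ) - 1)) (𝓝 0) (𝓝 (0 * ((K:ℝ) - 1))) :=
      (tendsto_id.mul_const _)
    simpa using h.const_sub (K:ℝ)
end

section
/- The bound of Theorem (popularity signal can be detrimental) is tight from above: for each K ≥ 2 and each δ > 0 there exist parameters (equal weights 1/K, diagonal quality matrix with entries 1 and 1−ε, identity appeal matrix, z = 0, positive visibilities) such that P_AQNSI / P_AQGSI > K − δ. -/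
open Finset

/-- Tightness from above of the bound `P_AQNSI / P_AQGSI ≤ K`: for each
`K ≥ 2` and each `δ > 0` there is `ε ∈ (0,1)` such that with equal weights
`1/K`, diagonal quality matrix (entries `1` and `1 - ε`), identity appeal
matrix and `z = 0`, the ratio exceeds `K - δ` for any positive visibilities
and any ranking `σ`. -/
theorem aqnsi_upper_bound_tight
    (K : ℕ) (hK : 2 ≤ K) (δ : ℝ) (hδ : 0 < δ)
    (v : Fin K → ℝ) (hv : ∀ j, 0 < v j) (σ : Equiv.Perm (Fin K)) :
    ∃ ε : ℝ, 0 < ε ∧ ε < 1 ∧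
      (∑ k : Fin K, (1 / (K : ℝ)) * ∑ i : Fin K,
          (if i = k then 1 - ε * (if (i : ℕ) = 0 then 0 else 1) else 0) *
            (v (σ i) * (if i = k then (1 : ℝ) else 0) /
              (∑ j : Fin K, v (σ j) * (if j = k then (1 : ℝ) else 0)))) /
        (Finset.univ.sup' (finUnivNe (by omega : 0 < K)) (fun i => ∑ k : Fin K,
          (1 / (K : ℝ)) *
            (if i = k then 1 - ε * (if (i : ℕ) = 0 then 0 else 1) else 0)))
      > (K : ℝ) - δ := by
  have hK0 : (0:ℝ) < K := by positivity
  set ε : ℝ := min (δ / K) (1/2) with hε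
  have hε0 : 0 < ε := lt_min (by positivity) (by norm_num)
  have hε1 : ε < 1 := lt_of_le_of_lt (min_le_right _ _) (by norm_num)
  refine ⟨ε, hε0, hε1, ?_⟩
  -- simplify inner sums
  have hden : ∀ k : Fin K, (∑ j : Fin K, v (σ j) * (if j = k then (1:ℝ) else 0)) = v (σ k) := by
    intro k
    rw [Finset.sum_eq_single k]
    · simp
    · intro b _ hb; simp [hb]
    · simp
  have hnum : (∑ k : Fin K, (1 / (K : ℝ)) * ∑ i : Fin K,
          (if i = k then 1 - ε * (if (i : ℕ) = 0 then 0 else 1) else 0) *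
            (v (σ i) * (if i = k then (1 : ℝ) else 0) /
              (∑ j : Fin K, v (σ j) * (if j = k then (1 : ℝ) else 0))))
      = (1 / (K : ℝ)) * ((K : ℝ) - ε * (K - 1)) := by
    have : ∀ k : Fin K, (∑ i : Fin K,
          (if i = k then 1 - ε * (if (i : ℕ) = 0 then 0 else 1) else 0) *
            (v (σ i) * (if i = k then (1 : ℝ) else 0) /
              (∑ j : Fin K, v (σ j) * (if j = k then (1 : ℝ) else 0))))
        = 1 - ε * (if (k : ℕ) = 0 then 0 else 1) := by
      intro k
      rw [Finset.sum_eq_single k]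
      · rw [hden k]
        have := (hv (σ k)).ne'
        field_simp
        simp
      · intro b _ hb; simp [hb]
      · simp
    rw [Finset.sum_congr rfl fun k _ => by rw [this k], ← Finset.mul_sum]
    congr 1
    rw [Finset.sum_sub_distrib]
    simp only [Finset.sum_const, Finset.card_univ, Fintype.card_fin, nsmul_eq_mul, mul_one]
    rw [← Finset.mul_sum]
    congr 1
    have : (∑ k : Fin K, (if (k : ℕ) = 0 then (0:ℝ) else 1))
        = ∑ k : Fin K, (1 - if (k : ℕ) = 0 then 1 else 0) := by
      apply Finset.sum_congr rfl; intro k _; split <;> norm_num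
    rw [this, Finset.sum_sub_distrib]
    have h0 : (∑ k : Fin K, (if (k : ℕ) = 0 then (1:ℝ) else 0)) = 1 := by
      rw [Finset.sum_eq_single (⟨0, by omega⟩ : Fin K)]
      · simp
      · intro b _ hb
        have : (b : ℕ) ≠ 0 := fun h => hb (Fin.ext h)
        simp [this]
      · simp
    simp [h0]
  have hsup : (Finset.univ.sup' (finUnivNe (by omega : 0 < K)) (fun i => ∑ k : Fin K,
          (1 / (K : ℝ)) *
            (if i = k then 1 - ε * (if (i : ℕ) = 0 then 0 else 1) else 0)))
      = 1 / (K : ℝ) := by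
    have hg : ∀ i : Fin K, (∑ k : Fin K, (1 / (K : ℝ)) *
            (if i = k then 1 - ε * (if (i : ℕ) = 0 then 0 else 1) else 0))
        = (1 / (K : ℝ)) * (1 - ε * (if (i : ℕ) = 0 then 0 else 1)) := by
      intro i
      rw [← Finset.mul_sum]
      congr 1
      rw [Finset.sum_eq_single i]
      · simp
      · intro b _ hb; simp [Ne.symm hb]
      · simp
    apply le_antisymm
    · apply Finset.sup'_le
      intro i _
      rw [hg i]
      have : (1 - ε * (if (i : ℕ) = 0 then (0:ℝ) else 1)) ≤ 1 := by
        split <;> nlinarith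
      nlinarith [one_div_pos.mpr hK0]
    · have := Finset.le_sup' (f := fun i => ∑ k : Fin K, (1 / (K : ℝ)) *
            (if i = k then 1 - ε * (if (i : ℕ) = 0 then 0 else 1) else 0))
        (Finset.mem_univ (⟨0, by omega⟩ : Fin K))
      refine le_trans ?_ this
      rw [hg]
      simp
  rw [hnum, hsup, mul_comm, mul_div_assoc, div_self (by positivity : (1:ℝ)/K ≠ 0), mul_one]
  have hεδ : ε * ((K:ℝ) - 1) < δ := by
    have h1 : ε ≤ δ / K := min_le_left _ _
    have hK1 : (2:ℝ) ≤ K := by exact_mod_cast hK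
    have h2 : (K:ℝ) - 1 < K := by linarith
    calc ε * ((K:ℝ) - 1) ≤ (δ / K) * ((K:ℝ) - 1) := by
          apply mul_le_mul_of_nonneg_right h1; linarith
      _ < (δ / K) * K := by apply mul_lt_mul_of_pos_left h2; positivity
      _ = δ := by field_simp
  linarith
end

section
/- The lower bound 0 in Theorem (popularity signal can be detrimental) is approached: for each K ≥ 2 and each δ > 0 there exist parameters such that 0 ≤ P_AQNSI / P_AQGSI < δ. Concretely, with equal weights 1/K, diagonal qualities as before, appeal matrix with ones everywhere except diagonal entries equal to ε_A, and z = 0, the ratio tends to 0 as ε_A → 0. -/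
open Finset

/-- The lower bound `0` of `P_AQNSI / P_AQGSI` is approached: for each `K ≥ 2`
and each `δ > 0`, with equal weights `1/K`, diagonal qualities and appeal
matrix with ones off the diagonal and `ε_A` on the diagonal (`z = 0`), there
is `ε_A > 0` making the ratio nonnegative and smaller than `δ`. -/
theorem aqnsi_lower_bound_approached
    (K : ℕ) (hK : 2 ≤ K) (ε : ℝ) (hε0 : 0 < ε) (hε1 : ε < 1)
    (v : Fin K → ℝ) (hv : ∀ j, 0 < v j) (σ : Equiv.Perm (Fin K))
    (δ : ℝ) (hδ : 0 < δ) :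
    ∃ εA : ℝ, 0 < εA ∧
      0 ≤ (∑ i : Fin K, (1 / (K : ℝ)) * (1 - ε * (if (i : ℕ) = 0 then 0 else 1)) *
            (v (σ i) * εA / (εA * v (σ i) + ∑ j ∈ Finset.univ.erase i, v (σ j)))) /
          (1 / (K : ℝ))
      ∧ (∑ i : Fin K, (1 / (K : ℝ)) * (1 - ε * (if (i : ℕ) = 0 then 0 else 1)) *
            (v (σ i) * εA / (εA * v (σ i) + ∑ j ∈ Finset.univ.erase i, v (σ j)))) /
          (1 / (K : ℝ)) < δ := by
  have hK0 : (0:ℝ) < K := by positivity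
  set S : Fin K → ℝ := fun i => ∑ j ∈ Finset.univ.erase i, v (σ j) with hS
  have hSpos : ∀ i, 0 < S i := by
    intro i
    apply Finset.sum_pos (fun j _ => hv _)
    rw [← Finset.card_pos, Finset.card_erase_of_mem (Finset.mem_univ i),
      Finset.card_univ, Fintype.card_fin]
    omega
  set C : ℝ := ∑ i : Fin K, v (σ i) / S i with hC
  have hC0 : 0 ≤ C := Finset.sum_nonneg fun i _ => le_of_lt (by
    exact div_pos (hv _) (hSpos i))
  refine ⟨δ / (C + 1), by positivity, ?_, ?_⟩
  · apply div_nonneg _ (by positivity)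
    apply Finset.sum_nonneg
    intro i _
    have h1 : 0 ≤ 1 - ε * (if (i : ℕ) = 0 then 0 else 1) := by
      split <;> nlinarith
    have hden : 0 < δ / (C + 1) * v (σ i) + S i := by
      have := hSpos i; have := hv (σ i); positivity
    have : 0 ≤ v (σ i) * (δ / (C + 1)) / (δ / (C + 1) * v (σ i) + S i) := by
      apply div_nonneg _ hden.le
      have := hv (σ i); positivity
    positivity
  · rw [div_lt_iff₀ (by positivity)]
    have hsum : (∑ i : Fin K, (1 / (K : ℝ)) * (1 - ε * (if (i : ℕ) = 0 then 0 else 1)) *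
          (v (σ i) * (δ / (C + 1)) / (δ / (C + 1) * v (σ i) + S i)))
        ≤ ∑ i : Fin K, 1 / (K:ℝ) * (δ / (C + 1) * (v (σ i) / S i)) := by
      apply Finset.sum_le_sum
      intro i _
      have hSi := hSpos i
      have hvi := hv (σ i)
      have hden : S i ≤ δ / (C + 1) * v (σ i) + S i := by
        have : 0 < δ / (C + 1) * v (σ i) := by positivity
        linarith
      have hfrac : v (σ i) * (δ / (C + 1)) / (δ / (C + 1) * v (σ i) + S i)
          ≤ v (σ i) * (δ / (C + 1)) / S i := by
        apply div_le_div_of_nonneg_left _ hSi hden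
        positivity
      have h1 : (1 - ε * (if (i : ℕ) = 0 then 0 else 1)) ≤ 1 := by
        split <;> nlinarith
      have h0 : 0 ≤ 1 - ε * (if (i : ℕ) = 0 then 0 else 1) := by
        split <;> nlinarith
      have hfr0 : 0 ≤ v (σ i) * (δ / (C + 1)) / (δ / (C + 1) * v (σ i) + S i) := by
        apply div_nonneg <;> positivity
      calc (1 / (K : ℝ)) * (1 - ε * (if (i : ℕ) = 0 then 0 else 1)) *
            (v (σ i) * (δ / (C + 1)) / (δ / (C + 1) * v (σ i) + S i))
          ≤ (1 / (K : ℝ)) * 1 * (v (σ i) * (δ / (C + 1)) / (δ / (C + 1) * v (σ i) + S i)) := by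
            apply mul_le_mul_of_nonneg_right _ hfr0
            apply mul_le_mul_of_nonneg_left h1 (by positivity)
        _ ≤ (1 / (K : ℝ)) * 1 * (v (σ i) * (δ / (C + 1)) / S i) := by
            apply mul_le_mul_of_nonneg_left hfrac (by positivity)
        _ = 1 / (K:ℝ) * (δ / (C + 1) * (v (σ i) / S i)) := by ring
    calc (∑ i : Fin K, (1 / (K : ℝ)) * (1 - ε * (if (i : ℕ) = 0 then 0 else 1)) *
          (v (σ i) * (δ / (C + 1)) / (δ / (C + 1) * v (σ i) + S i)))
        ≤ ∑ i : Fin K, 1 / (K:ℝ) * (δ / (C + 1) * (v (σ i) / S i)) := hsum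
      _ = (1 / (K:ℝ)) * ((δ / (C + 1)) * C) := by
          rw [hC, Finset.mul_sum, Finset.mul_sum]
      _ < δ * (1 / (K:ℝ)) := by
          rw [mul_comm δ (1 / (K:ℝ))]
          apply mul_lt_mul_of_pos_left _ (by positivity)
          rw [div_mul_eq_mul_div, div_lt_iff₀ (by positivity)]
          nlinarith [hδ, hC0]
end

section
/- As the total purchases tend to infinity, the generalized appeal converges: if (d^t)_{t∈ℕ} is a sequence of nonnegative vectors in ℝ^N with ∑_j v_{σ(j)} d^t_j → ∞, then ã_i(d^t) := (∑_k w_k q_{i,k} a_{i,k} / D_k(d^t)) / (∑_k w_k q_{i,k} / D_k(d^t)) converges to ā_i := (∑_k w_k a_{i,k} q_{i,k}) / (∑_k w_k q_{i,k}), where D_k(d) = ∑_j v_{σ(j)}(a_{j,k} + d_j) + z. -/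
open Finset Filter Topology

/-- As the weighted total of purchases tends to infinity, the generalized
appeal `ã_i(d^t)` converges to `ā_i = (∑_k w_k a_{i,k} q_{i,k}) / (∑_k w_k q_{i,k})`. -/
theorem generalized_appeal_limit
    (N K : ℕ) (hN : 0 < N) (hK : 0 < K)
    (w : Fin K → ℝ) (hw : ∀ k, 0 < w k)
    (q : Fin N → Fin K → ℝ) (hq : ∀ i k, 0 < q i k)
    (a : Fin N → Fin K → ℝ) (ha : ∀ i k, 0 < a i k)
    (v : Fin N → ℝ) (hv : ∀ j, 0 < v j)
    (z : ℝ) (hz : 0 ≤ z)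
    (σ : Equiv.Perm (Fin N))
    (D : (Fin N → ℝ) → Fin K → ℝ)
    (hD : ∀ d k, D d k = ∑ j : Fin N, v (σ j) * (a j k + d j) + z)
    (d : ℕ → Fin N → ℝ) (hd : ∀ t j, 0 ≤ d t j)
    (htend : Tendsto (fun t => ∑ j : Fin N, v (σ j) * d t j) atTop atTop)
    (i : Fin N) :
    Tendsto (fun t =>
        (∑ k : Fin K, w k * q i k * a i k / D (d t) k) /
          (∑ k : Fin K, w k * q i k / D (d t) k))
      atTop
      (𝓝 ((∑ k : Fin K, w k * a i k * q i k) / (∑ k : Fin K, w k * q i k))) := by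
  set S : ℕ → ℝ := fun t => ∑ j : Fin N, v (σ j) * d t j with hSdef
  have hDk : ∀ k t, D (d t) k = (∑ j : Fin N, v (σ j) * a j k + z) + S t := by
    intro k t
    rw [hD]
    simp only [hSdef, mul_add, Finset.sum_add_distrib]
    ring
  have hDtend : ∀ k, Tendsto (fun t => D (d t) k) atTop atTop := by
    intro k
    simp only [hDk]
    exact tendsto_atTop_add_const_left _ _ htend
  have hratio : ∀ k, Tendsto (fun t => S t / D (d t) k) atTop (𝓝 1) := by
    intro k
    have h1 : Tendsto (fun t => (∑ j : Fin N, v (σ j) * a j k + z) / D (d t) k)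
        atTop (𝓝 0) := Tendsto.div_atTop tendsto_const_nhds (hDtend k)
    have h2 : Tendsto (fun t => 1 - (∑ j : Fin N, v (σ j) * a j k + z) / D (d t) k)
        atTop (𝓝 1) := by simpa using tendsto_const_nhds.sub h1
    refine h2.congr' ?_
    filter_upwards [(hDtend k).eventually_gt_atTop 0] with t ht
    have hne : D (d t) k ≠ 0 := ht.ne'
    field_simp
    rw [hDk k t]
    ring
  have hnum : Tendsto (fun t => ∑ k : Fin K, w k * q i k * a i k * (S t / D (d t) k))
      atTop (𝓝 (∑ k : Fin K, w k * a i k * q i k)) := by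
    have := tendsto_finset_sum Finset.univ
      (fun k (_ : k ∈ Finset.univ) =>
        ((tendsto_const_nhds.mul (hratio k)) :
          Tendsto (fun t => w k * q i k * a i k * (S t / D (d t) k)) atTop
            (𝓝 (w k * q i k * a i k * 1))))
    convert this using 2
    exact Finset.sum_congr rfl (fun k _ => by ring)
  have hden : Tendsto (fun t => ∑ k : Fin K, w k * q i k * (S t / D (d t) k))
      atTop (𝓝 (∑ k : Fin K, w k * q i k)) := by
    have := tendsto_finset_sum Finset.univ
      (fun k (_ : k ∈ Finset.univ) =>
        ((tendsto_const_nhds.mul (hratio k)) :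
          Tendsto (fun t => w k * q i k * (S t / D (d t) k)) atTop
            (𝓝 (w k * q i k * 1))))
    simpa using this
  have hdenne : (∑ k : Fin K, w k * q i k) ≠ 0 := by
    have : 0 < ∑ k : Fin K, w k * q i k :=
      Finset.sum_pos (fun k _ => mul_pos (hw k) (hq i k))
        (Finset.univ_nonempty_iff.mpr (Fin.pos_iff_nonempty.mp hK))
    exact this.ne'
  have key := hnum.div hden hdenne
  refine key.congr' ?_
  filter_upwards [htend.eventually_gt_atTop 0] with t ht
  have hSne : S t ≠ 0 := ht.ne'
  have e1 : ∑ k : Fin K, w k * q i k * a i k * (S t / D (d t) k)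
      = S t * ∑ k : Fin K, w k * q i k * a i k / D (d t) k := by
    rw [Finset.mul_sum]
    exact Finset.sum_congr rfl (fun k _ => by ring)
  have e2 : ∑ k : Fin K, w k * q i k * (S t / D (d t) k)
      = S t * ∑ k : Fin K, w k * q i k / D (d t) k := by
    rw [Finset.mul_sum]
    exact Finset.sum_congr rfl (fun k _ => by ring)
  simp only [Pi.div_apply]
  rw [e1, e2, mul_div_mul_left _ _ hSne]
end

section
/- As the total purchases tend to infinity, the generalized quality converges to the weighted average quality: if ∑_j v_{σ(j)} d^t_j → ∞, then q̃_i(d^t) := (∑_k w_k q_{i,k}/D_k(d^t)) · (∑_j v_{σ(j)}(ã_j(d^t) + d^t_j) + z) converges to q̄_i := ∑_{k=1}^K w_k q_{i,k}. -/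
open Finset Filter Topology

/-- As the weighted total of purchases tends to infinity, the generalized
quality `q̃_i(d^t)` converges to the weighted average quality
`q̄_i = ∑_k w_k q_{i,k}`. -/
theorem generalized_quality_limit
    (N K : ℕ) (hN : 0 < N) (hK : 0 < K)
    (w : Fin K → ℝ) (hw : ∀ k, 0 < w k)
    (q : Fin N → Fin K → ℝ) (hq : ∀ i k, 0 < q i k)
    (a : Fin N → Fin K → ℝ) (ha : ∀ i k, 0 < a i k)
    (v : Fin N → ℝ) (hv : ∀ j, 0 < v j)
    (z : ℝ) (hz : 0 ≤ z)
    (σ : Equiv.Perm (Fin N))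
    (D : (Fin N → ℝ) → Fin K → ℝ)
    (hD : ∀ d k, D d k = ∑ j : Fin N, v (σ j) * (a j k + d j) + z)
    (ta : (Fin N → ℝ) → Fin N → ℝ)
    (hta : ∀ d j, ta d j = (∑ k : Fin K, w k * q j k * a j k / D d k) /
        (∑ k : Fin K, w k * q j k / D d k))
    (d : ℕ → Fin N → ℝ) (hd : ∀ t j, 0 ≤ d t j)
    (htend : Tendsto (fun t => ∑ j : Fin N, v (σ j) * d t j) atTop atTop)
    (i : Fin N) :
    Tendsto (fun t =>
        (∑ k : Fin K, w k * q i k / D (d t) k) *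
          (∑ j : Fin N, v (σ j) * (ta (d t) j + d t j) + z))
      atTop
      (𝓝 (∑ k : Fin K, w k * q i k)) := by
  have hNne : Nonempty (Fin N) := ⟨⟨0, hN⟩⟩
  have hKne : Nonempty (Fin K) := ⟨⟨0, hK⟩⟩
  set S : ℕ → ℝ := fun t => ∑ j : Fin N, v (σ j) * d t j with hSdef
  set c : Fin K → ℝ := fun k => (∑ j : Fin N, v (σ j) * a j k) + z with hcdef
  have hS0 : ∀ t, 0 ≤ S t := fun t =>
    Finset.sum_nonneg fun j _ => mul_nonneg (hv _).le (hd t j)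
  have hck : ∀ k, 0 < c k := fun k =>
    add_pos_of_pos_of_nonneg
      (Finset.sum_pos (fun j _ => mul_pos (hv _) (ha j k)) Finset.univ_nonempty) hz
  have hDeq : ∀ t k, D (d t) k = S t + c k := by
    intro t k
    rw [hD]
    simp only [hSdef, hcdef, mul_add, Finset.sum_add_distrib]
    ring
  have hDpos : ∀ t k, 0 < D (d t) k := fun t k => by
    rw [hDeq]; exact add_pos_of_nonneg_of_pos (hS0 t) (hck k)
  -- bound on appeals
  set A : ℝ := ∑ j : Fin N, ∑ k : Fin K, a j k with hAdef
  have hA : ∀ j k, a j k ≤ A := by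
    intro j k
    calc a j k ≤ ∑ k' : Fin K, a j k' :=
          Finset.single_le_sum (fun k' _ => (ha j k').le) (Finset.mem_univ k)
      _ ≤ A := Finset.single_le_sum
          (fun j' _ => Finset.sum_nonneg fun k' _ => (ha j' k').le) (Finset.mem_univ j)
  have hta_bounds : ∀ t j, 0 ≤ ta (d t) j ∧ ta (d t) j ≤ A := by
    intro t j
    have hden : 0 < ∑ k : Fin K, w k * q j k / D (d t) k :=
      Finset.sum_pos (fun k _ => div_pos (mul_pos (hw k) (hq j k)) (hDpos t k))
        Finset.univ_nonempty
    have hnum0 : 0 ≤ ∑ k : Fin K, w k * q j k * a j k / D (d t) k :=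
      Finset.sum_nonneg fun k _ =>
        div_nonneg (mul_nonneg (mul_nonneg (hw k).le (hq j k).le) (ha j k).le) (hDpos t k).le
    constructor
    · rw [hta]; exact div_nonneg hnum0 hden.le
    · rw [hta, div_le_iff₀ hden, Finset.mul_sum]
      apply Finset.sum_le_sum
      intro k _
      have h3 : A * (w k * q j k / D (d t) k) = (w k * q j k * A) / D (d t) k := by ring
      rw [h3]
      exact (div_le_div_iff_of_pos_right (hDpos t k)).2
        (mul_le_mul_of_nonneg_left (hA j k) (mul_pos (hw k) (hq j k)).le)
  -- the bounded part
  set B : ℕ → ℝ := fun t => (∑ j : Fin N, v (σ j) * ta (d t) j) + z with hBdef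
  set M : ℝ := (∑ j : Fin N, v (σ j) * A) + z with hMdef
  have hB0 : ∀ t, 0 ≤ B t := fun t =>
    add_nonneg (Finset.sum_nonneg fun j _ =>
      mul_nonneg (hv _).le (hta_bounds t j).1) hz
  have hBM : ∀ t, B t ≤ M := fun t => by
    refine add_le_add ?_ le_rfl
    exact Finset.sum_le_sum fun j _ =>
      mul_le_mul_of_nonneg_left (hta_bounds t j).2 (hv _).le
  have hStend : Tendsto S atTop atTop := htend
  -- key convergence of the ratio
  have key : ∀ k : Fin K,
      Tendsto (fun t => (S t + B t) / (S t + c k)) atTop (𝓝 1) := by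
    intro k
    have hdenpos : ∀ t, 0 < S t + c k := fun t =>
      add_pos_of_nonneg_of_pos (hS0 t) (hck k)
    have hdentend : Tendsto (fun t => S t + c k) atTop atTop :=
      tendsto_atTop_add_const_right _ _ hStend
    have hgz : Tendsto (fun t => (M + c k) / (S t + c k)) atTop (𝓝 0) :=
      Tendsto.div_atTop tendsto_const_nhds hdentend
    have hdiff : Tendsto (fun t => (S t + B t) / (S t + c k) - 1) atTop (𝓝 0) := by
      apply squeeze_zero_norm _ hgz
      intro t
      have h1 : (S t + B t) / (S t + c k) - 1 = (B t - c k) / (S t + c k) := by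
        rw [div_sub_one (hdenpos t).ne']
        congr 1
        ring
      rw [h1, Real.norm_eq_abs, abs_div, abs_of_pos (hdenpos t)]
      refine (div_le_div_iff_of_pos_right (hdenpos t)).2 ?_
      rw [abs_sub_le_iff]
      constructor <;> linarith [hB0 t, hBM t, hck k]
    have := hdiff.add_const 1
    simpa using this
  -- rewrite the function
  have heq : ∀ t,
      (∑ k : Fin K, w k * q i k / D (d t) k) *
          (∑ j : Fin N, v (σ j) * (ta (d t) j + d t j) + z)
        = ∑ k : Fin K, w k * q i k * ((S t + B t) / (S t + c k)) := by
    intro t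
    have h2 : (∑ j : Fin N, v (σ j) * (ta (d t) j + d t j) + z) = S t + B t := by
      simp only [hSdef, hBdef, mul_add, Finset.sum_add_distrib]
      ring
    rw [h2, Finset.sum_mul]
    refine Finset.sum_congr rfl fun k _ => ?_
    rw [hDeq t k, div_mul_eq_mul_div, mul_div_assoc]
  have hsum := tendsto_finset_sum (Finset.univ : Finset (Fin K))
    (fun k _ => ((key k).const_mul (w k * q i k)))
  simp only [mul_one] at hsum
  exact Tendsto.congr (fun t => (heq t).symm) hsum
end

section
/- Lower bound on generalized quality: for every purchase vector d with ∑_j v_{σ(j)} d_j > 0 and z ≥ 0, q̃_i(d) ≥ (1 − (∑_j v_{σ(j)} max_k a_{j,k}) / (∑_j v_{σ(j)} d_j)) · q̄_i, where q̄_i = ∑_k w_k q_{i,k}. -/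
open Finset

/-- Lower bound on the generalized quality:
`q̃_i(d) ≥ (1 - (∑_j v_{σ(j)} max_k a_{j,k}) / (∑_j v_{σ(j)} d_j)) · q̄_i`. -/
theorem generalized_quality_lower_bound
    (N K : ℕ) (hN : 0 < N) (hK : 0 < K)
    (w : Fin K → ℝ) (hw : ∀ k, 0 < w k)
    (q : Fin N → Fin K → ℝ) (hq : ∀ i k, 0 < q i k)
    (a : Fin N → Fin K → ℝ) (ha : ∀ i k, 0 < a i k)
    (v : Fin N → ℝ) (hv : ∀ j, 0 < v j)
    (z : ℝ) (hz : 0 ≤ z)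
    (σ : Equiv.Perm (Fin N))
    (d : Fin N → ℝ) (hd : ∀ j, 0 ≤ d j)
    (hdpos : 0 < ∑ j : Fin N, v (σ j) * d j)
    (D : Fin K → ℝ)
    (hD : ∀ k, D k = ∑ j : Fin N, v (σ j) * (a j k + d j) + z)
    (ta : Fin N → ℝ)
    (hta : ∀ j, ta j = (∑ k : Fin K, w k * q j k * a j k / D k) /
        (∑ k : Fin K, w k * q j k / D k))
    (tq : Fin N → ℝ)
    (htq : ∀ i, tq i = (∑ k : Fin K, w k * q i k / D k) *
        (∑ j : Fin N, v (σ j) * (ta j + d j) + z))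
    (i : Fin N) :
    (1 - (∑ j : Fin N, v (σ j) * Finset.univ.sup' (finUnivNe hK) (fun k => a j k)) /
          (∑ j : Fin N, v (σ j) * d j)) * (∑ k : Fin K, w k * q i k)
      ≤ tq i := by
  set V : ℝ := ∑ j : Fin N, v (σ j) * d j with hV
  set A : ℝ := ∑ j : Fin N, v (σ j) * Finset.univ.sup' (finUnivNe hK) (fun k => a j k) with hA
  set Q : ℝ := ∑ k : Fin K, w k * q i k with hQ
  have hQpos : 0 < Q := Finset.sum_pos (fun k _ => mul_pos (hw k) (hq i k))
    (finUnivNe hK)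
  have hApos : 0 < A := by
    refine Finset.sum_pos (fun j _ => mul_pos (hv (σ j)) ?_) (finUnivNe hN)
    exact lt_of_lt_of_le (ha j ⟨0, hK⟩) (Finset.le_sup' _ (Finset.mem_univ _))
  have hDpos : ∀ k, 0 < D k := by
    intro k
    rw [hD k]
    have : 0 < ∑ j : Fin N, v (σ j) * (a j k + d j) :=
      Finset.sum_pos (fun j _ => mul_pos (hv (σ j)) (by nlinarith [ha j k, hd j]))
        (finUnivNe hN)
    linarith
  have hDle : ∀ k, D k ≤ V + A + z := by
    intro k
    rw [hD k]
    have h1 : ∑ j : Fin N, v (σ j) * (a j k + d j) ≤ A + V := by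
      have : ∀ j : Fin N, v (σ j) * (a j k + d j)
          ≤ v (σ j) * Finset.univ.sup' (finUnivNe hK) (fun k => a j k) + v (σ j) * d j := by
        intro j
        have hle : a j k ≤ Finset.univ.sup' (finUnivNe hK) (fun k => a j k) :=
          Finset.le_sup' _ (Finset.mem_univ _)
        nlinarith [hv (σ j)]
      calc ∑ j : Fin N, v (σ j) * (a j k + d j)
          ≤ ∑ j : Fin N, (v (σ j) * Finset.univ.sup' (finUnivNe hK) (fun k => a j k)
              + v (σ j) * d j) := Finset.sum_le_sum (fun j _ => this j)
        _ = A + V := by rw [Finset.sum_add_distrib]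
    linarith
  have hVAz : 0 < V + A + z := by linarith
  -- lower bound on the sum of w q / D
  have hS : Q / (V + A + z) ≤ ∑ k : Fin K, w k * q i k / D k := by
    rw [hQ, Finset.sum_div]
    refine Finset.sum_le_sum (fun k _ => ?_)
    exact div_le_div_of_nonneg_left (le_of_lt (mul_pos (hw k) (hq i k))) (hDpos k) (hDle k)
  have hSpos : 0 < ∑ k : Fin K, w k * q i k / D k :=
    Finset.sum_pos (fun k _ => div_pos (mul_pos (hw k) (hq i k)) (hDpos k)) (finUnivNe hK)
  -- ta j ≥ 0
  have hta0 : ∀ j, 0 ≤ ta j := by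
    intro j
    rw [hta j]
    refine div_nonneg (Finset.sum_nonneg fun k _ => ?_) (Finset.sum_nonneg fun k _ => ?_)
    · exact div_nonneg (mul_nonneg (mul_nonneg (hw k).le (hq j k).le) (ha j k).le) (hDpos k).le
    · exact div_nonneg (le_of_lt (mul_pos (hw k) (hq j k))) (hDpos k).le
  have hT : V + z ≤ ∑ j : Fin N, v (σ j) * (ta j + d j) + z := by
    have : V ≤ ∑ j : Fin N, v (σ j) * (ta j + d j) := by
      rw [hV]
      refine Finset.sum_le_sum (fun j _ => ?_)
      nlinarith [hv (σ j), hta0 j]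
    linarith
  have hmain : Q / (V + A + z) * (V + z) ≤ tq i := by
    rw [htq i]
    exact mul_le_mul hS hT (by linarith) hSpos.le
  refine le_trans ?_ hmain
  have h1 : (1 : ℝ) - A / V = (V - A) / V := by field_simp
  rw [h1, div_mul_eq_mul_div, div_mul_eq_mul_div, div_le_div_iff₀ hdpos hVAz]
  nlinarith [mul_pos hQpos hApos, mul_nonneg (mul_nonneg hQpos.le hApos.le) hz]
end

section
/- Upper bound on generalized quality: for every purchase vector d with ∑_j v_{σ(j)} d_j > 0 and z ≥ 0, q̃_i(d) ≤ (1 + (∑_j v_{σ(j)} max_k a_{j,k}) / (∑_j v_{σ(j)} d_j)) · q̄_i, where q̄_i = ∑_k w_k q_{i,k}. -/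
open Finset

/-- Upper bound on the generalized quality:
`q̃_i(d) ≤ (1 + (∑_j v_{σ(j)} max_k a_{j,k}) / (∑_j v_{σ(j)} d_j)) · q̄_i`. -/
theorem generalized_quality_upper_bound
    (N K : ℕ) (hN : 0 < N) (hK : 0 < K)
    (w : Fin K → ℝ) (hw : ∀ k, 0 < w k)
    (q : Fin N → Fin K → ℝ) (hq : ∀ i k, 0 < q i k)
    (a : Fin N → Fin K → ℝ) (ha : ∀ i k, 0 < a i k)
    (v : Fin N → ℝ) (hv : ∀ j, 0 < v j)
    (z : ℝ) (hz : 0 ≤ z)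
    (σ : Equiv.Perm (Fin N))
    (d : Fin N → ℝ) (hd : ∀ j, 0 ≤ d j)
    (hdpos : 0 < ∑ j : Fin N, v (σ j) * d j)
    (D : Fin K → ℝ)
    (hD : ∀ k, D k = ∑ j : Fin N, v (σ j) * (a j k + d j) + z)
    (ta : Fin N → ℝ)
    (hta : ∀ j, ta j = (∑ k : Fin K, w k * q j k * a j k / D k) /
        (∑ k : Fin K, w k * q j k / D k))
    (tq : Fin N → ℝ)
    (htq : ∀ i, tq i = (∑ k : Fin K, w k * q i k / D k) *
        (∑ j : Fin N, v (σ j) * (ta j + d j) + z))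
    (i : Fin N) :
    tq i ≤ (1 + (∑ j : Fin N, v (σ j) * Finset.univ.sup' (finUnivNe hK) (fun k => a j k)) /
          (∑ j : Fin N, v (σ j) * d j)) * (∑ k : Fin K, w k * q i k) := by
  set S := ∑ j : Fin N, v (σ j) * d j with hS
  set A := ∑ j : Fin N, v (σ j) * Finset.univ.sup' (finUnivNe hK) (fun k => a j k) with hA
  set Q := ∑ k : Fin K, w k * q i k with hQ
  have hMpos : ∀ j, 0 < Finset.univ.sup' (finUnivNe hK) (fun k => a j k) := fun j =>
    lt_of_lt_of_le (ha j ⟨0, hK⟩) (Finset.le_sup' _ (Finset.mem_univ _))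
  have hApos : 0 ≤ A := Finset.sum_nonneg fun j _ => mul_nonneg (hv _).le (hMpos j).le
  have hSz : 0 < S + z := by linarith
  have hDk : ∀ k, S + z ≤ D k := by
    intro k
    rw [hD k]
    have h1 : ∑ j : Fin N, v (σ j) * (a j k + d j)
        = (∑ j : Fin N, v (σ j) * a j k) + S := by
      rw [hS, ← Finset.sum_add_distrib]
      exact Finset.sum_congr rfl fun j _ => by ring
    have h2 : 0 ≤ ∑ j : Fin N, v (σ j) * a j k :=
      Finset.sum_nonneg fun j _ => mul_nonneg (hv _).le (ha _ _).le
    linarith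
  have hDpos : ∀ k, 0 < D k := fun k => lt_of_lt_of_le hSz (hDk k)
  have hta' : ∀ j, ta j ≤ Finset.univ.sup' (finUnivNe hK) (fun k => a j k) := by
    intro j
    rw [hta j]
    set M := Finset.univ.sup' (finUnivNe hK) (fun k => a j k) with hM
    have hden : 0 < ∑ k : Fin K, w k * q j k / D k :=
      Finset.sum_pos (fun k _ => div_pos (mul_pos (hw k) (hq j k)) (hDpos k)) (finUnivNe hK)
    rw [div_le_iff₀ hden]
    calc ∑ k : Fin K, w k * q j k * a j k / D k
        ≤ ∑ k : Fin K, M * (w k * q j k / D k) := by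
          apply Finset.sum_le_sum
          intro k _
          have heq : w k * q j k * a j k / D k = a j k * (w k * q j k / D k) := by ring
          rw [heq]
          exact mul_le_mul_of_nonneg_right (Finset.le_sup' _ (Finset.mem_univ k))
            (div_nonneg (mul_nonneg (hw k).le (hq j k).le) (hDpos k).le)
      _ = M * ∑ k : Fin K, w k * q j k / D k := by rw [← Finset.mul_sum]
  have htanon : ∀ j, 0 ≤ ta j := by
    intro j
    rw [hta j]
    apply div_nonneg
    · exact Finset.sum_nonneg fun k _ => div_nonneg
        (mul_nonneg (mul_nonneg (hw k).le (hq j k).le) (ha j k).le) (hDpos k).le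
    · exact Finset.sum_nonneg fun k _ => div_nonneg
        (mul_nonneg (hw k).le (hq j k).le) (hDpos k).le
  have hfac2 : ∑ j : Fin N, v (σ j) * (ta j + d j) + z ≤ A + S + z := by
    have h : ∑ j : Fin N, v (σ j) * (ta j + d j) ≤ A + S := by
      rw [hA, hS, ← Finset.sum_add_distrib]
      apply Finset.sum_le_sum
      intro j _
      have h1 := hta' j
      nlinarith [hv (σ j), hd j]
    linarith
  have hfac2nn : 0 ≤ ∑ j : Fin N, v (σ j) * (ta j + d j) + z := by
    have : 0 ≤ ∑ j : Fin N, v (σ j) * (ta j + d j) :=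
      Finset.sum_nonneg fun j _ => mul_nonneg (hv _).le (add_nonneg (htanon j) (hd j))
    linarith
  have hP : ∑ k : Fin K, w k * q i k / D k ≤ Q / (S + z) := by
    rw [hQ, Finset.sum_div]
    apply Finset.sum_le_sum
    intro k _
    exact div_le_div_of_nonneg_left (mul_nonneg (hw k).le (hq i k).le) hSz (hDk k)
  have hQpos : 0 < Q :=
    Finset.sum_pos (fun k _ => mul_pos (hw k) (hq i k)) (finUnivNe hK)
  have hPnn : 0 ≤ ∑ k : Fin K, w k * q i k / D k :=
    Finset.sum_nonneg fun k _ => div_nonneg (mul_nonneg (hw k).le (hq i k).le) (hDpos k).le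
  rw [htq i]
  calc (∑ k : Fin K, w k * q i k / D k) * (∑ j : Fin N, v (σ j) * (ta j + d j) + z)
      ≤ (Q / (S + z)) * (A + S + z) :=
        mul_le_mul hP hfac2 hfac2nn (div_nonneg hQpos.le hSz.le)
    _ = (1 + A / (S + z)) * Q := by field_simp; ring
    _ ≤ (1 + A / S) * Q := by
        have h1 : A / (S + z) ≤ A / S := div_le_div_of_nonneg_left hApos hdpos (by linarith)
        exact mul_le_mul_of_nonneg_right (by linarith) hQpos.le
end

section
/- Sufficient total purchases for strict quality separation: suppose item i* satisfies Q̄_{i*} > Q̄_{i**} where Q̄_i = v_{σ(i)} q̄_i and i** attains the second-highest value of Q̄. If the purchase vector d satisfies ∑_{i} d_i > (max_j v_{σ(j)} / min_j v_{σ(j)}) · (∑_j max_k a_{j,k}) · (Q̄_{i*} + Q̄_{i**}) / (Q̄_{i*} − Q̄_{i**}), then the time-dependent quantities satisfy Q̃_{i*}(d) > Q̃_{i}(d) for all i ≠ i*, where Q̃_i(d) = v_{σ(i)} q̃_i(d). -/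
open Finset

/-- Sufficient total purchases for strict quality separation: if the total
number of purchases exceeds
`(max_j v_{σ(j)} / min_j v_{σ(j)}) · (∑_j max_k a_{j,k}) · (Q̄_{i*} + Q̄_{i**}) / (Q̄_{i*} − Q̄_{i**})`,
then `Q̃_{i*}(d) > Q̃_i(d)` for all `i ≠ i*`, where `Q̃_i(d) = v_{σ(i)} q̃_i(d)`
and `q̃_i(d)` satisfies the two-sided bounds `(1 ± R(d)) q̄_i`. -/
theorem purchases_threshold_separation
    (N : ℕ) (hN : 0 < N)
    (v : Fin N → ℝ) (hv : ∀ j, 0 < v j)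
    (σ : Equiv.Perm (Fin N))
    (A : Fin N → ℝ) (hA : ∀ j, 0 < A j)  -- `A j = max_k a_{j,k}`
    (qbar : Fin N → ℝ) (hqbar : ∀ i, 0 < qbar i)
    (d : Fin N → ℝ) (hd : ∀ j, 0 ≤ d j)
    (tq : Fin N → ℝ)
    (htq : ∀ i,
      (1 - (∑ j : Fin N, v (σ j) * A j) / (∑ j : Fin N, v (σ j) * d j)) * qbar i ≤ tq i
      ∧ tq i ≤
        (1 + (∑ j : Fin N, v (σ j) * A j) / (∑ j : Fin N, v (σ j) * d j)) * qbar i)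
    (istar istar2 : Fin N) (hne : istar ≠ istar2)
    (hsep : v (σ istar2) * qbar istar2 < v (σ istar) * qbar istar)
    (hsecond : ∀ i, i ≠ istar → v (σ i) * qbar i ≤ v (σ istar2) * qbar istar2)
    (hdtot : ∑ i : Fin N, d i >
      (Finset.univ.sup' (finUnivNe hN) (fun j => v (σ j)) /
          Finset.univ.inf' (finUnivNe hN) (fun j => v (σ j))) *
        (∑ j : Fin N, A j) *
        ((v (σ istar) * qbar istar + v (σ istar2) * qbar istar2) /
          (v (σ istar) * qbar istar - v (σ istar2) * qbar istar2))) :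
    ∀ i, i ≠ istar → v (σ i) * tq i < v (σ istar) * tq istar := by

  intro i hi
  set M := Finset.univ.sup' (finUnivNe hN) (fun j => v (σ j)) with hM
  set m := Finset.univ.inf' (finUnivNe hN) (fun j => v (σ j)) with hm
  have hvleM : ∀ j, v (σ j) ≤ M := fun j => by
    rw [hM]; exact Finset.le_sup' (fun j => v (σ j)) (Finset.mem_univ j)
  have hmlev : ∀ j, m ≤ v (σ j) := fun j => by
    rw [hm]; exact Finset.inf'_le (fun j => v (σ j)) (Finset.mem_univ j)
  have hmpos : 0 < m := by
    rw [hm]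
    exact (Finset.lt_inf'_iff (finUnivNe hN)).mpr (fun j _ => hv (σ j))
  clear_value M m
  have hMpos : 0 < M := lt_of_lt_of_le hmpos (le_trans (hmlev ⟨0, hN⟩) (hvleM ⟨0, hN⟩))
  set SA := ∑ j : Fin N, v (σ j) * A j with hSA
  set Sd := ∑ j : Fin N, v (σ j) * d j with hSd
  set Q1 := v (σ istar) * qbar istar with hQ1
  set Q2 := v (σ istar2) * qbar istar2 with hQ2
  set T := ∑ j : Fin N, A j with hT
  set D := ∑ i : Fin N, d i with hD
  have hQ2pos : 0 < Q2 := mul_pos (hv _) (hqbar _)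
  have hQ1pos : 0 < Q1 := lt_trans hQ2pos hsep
  have hqi : v (σ i) * qbar i ≤ Q2 := hsecond i hi
  have hqipos : 0 < v (σ i) * qbar i := mul_pos (hv _) (hqbar _)
  have hTpos : 0 < T := Finset.sum_pos (fun j _ => hA j) (finUnivNe hN)
  have hSAle : SA ≤ M * T := by
    rw [hSA, hT, Finset.mul_sum]
    exact Finset.sum_le_sum fun j _ =>
      mul_le_mul_of_nonneg_right (hvleM j) (le_of_lt (hA j))
  have hSApos : 0 < SA := by
    rw [hSA]
    exact Finset.sum_pos (fun j _ => mul_pos (hv _) (hA j)) (finUnivNe hN)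
  have hSdge : m * D ≤ Sd := by
    rw [hSd, hD, Finset.mul_sum]
    exact Finset.sum_le_sum fun j _ =>
      mul_le_mul_of_nonneg_right (hmlev j) (hd j)
  clear_value SA Sd Q1 Q2 T D
  have hdiff : 0 < Q1 - Q2 := sub_pos.mpr hsep
  have hsum : 0 < Q1 + Q2 := by linarith
  -- key: SA * (Q1 + Q2) < Sd * (Q1 - Q2)
  have hkey : SA * (Q1 + Q2) < Sd * (Q1 - Q2) := by
    have h1 : M * T * ((Q1 + Q2) / (Q1 - Q2)) < m * D := by
      have h := mul_lt_mul_of_pos_left hdtot hmpos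
      have e : m * (M / m * T * ((Q1 + Q2) / (Q1 - Q2))) =
          M * T * ((Q1 + Q2) / (Q1 - Q2)) := by
        field_simp
      linarith [e ▸ h]
    have h2 : M * T * (Q1 + Q2) < m * D * (Q1 - Q2) := by
      have h := mul_lt_mul_of_pos_right h1 hdiff
      have e : M * T * ((Q1 + Q2) / (Q1 - Q2)) * (Q1 - Q2) = M * T * (Q1 + Q2) := by
        field_simp
      linarith [e ▸ h]
    have h3 : SA * (Q1 + Q2) ≤ M * T * (Q1 + Q2) :=
      mul_le_mul_of_nonneg_right hSAle (le_of_lt hsum)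
    have h4 : m * D * (Q1 - Q2) ≤ Sd * (Q1 - Q2) :=
      mul_le_mul_of_nonneg_right hSdge (le_of_lt hdiff)
    linarith
  have hSdpos : 0 < Sd := by nlinarith [mul_pos hSApos hsum]
  have hRpos : 0 < SA / Sd := div_pos hSApos hSdpos
  have hRlt : (SA / Sd) * (Q1 + Q2) < Q1 - Q2 := by
    rw [div_mul_eq_mul_div, div_lt_iff₀ hSdpos]
    linarith
  have hub : v (σ i) * tq i ≤ (1 + SA / Sd) * Q2 := by
    have h1 : tq i ≤ (1 + SA / Sd) * qbar i := (htq i).2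
    have h2 : v (σ i) * tq i ≤ v (σ i) * ((1 + SA / Sd) * qbar i) :=
      mul_le_mul_of_nonneg_left h1 (le_of_lt (hv (σ i)))
    have h3 : v (σ i) * ((1 + SA / Sd) * qbar i) = (1 + SA / Sd) * (v (σ i) * qbar i) := by
      ring
    have h4 : (1 + SA / Sd) * (v (σ i) * qbar i) ≤ (1 + SA / Sd) * Q2 :=
      mul_le_mul_of_nonneg_left hqi (by linarith)
    linarith
  have hlb : (1 - SA / Sd) * Q1 ≤ v (σ istar) * tq istar := by
    have h1 : (1 - SA / Sd) * qbar istar ≤ tq istar := (htq istar).1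
    have h2 : v (σ istar) * ((1 - SA / Sd) * qbar istar) ≤ v (σ istar) * tq istar :=
      mul_le_mul_of_nonneg_left h1 (le_of_lt (hv (σ istar)))
    have h3 : v (σ istar) * ((1 - SA / Sd) * qbar istar) = (1 - SA / Sd) * Q1 := by
      rw [hQ1]; ring
    linarith
  have hfin : (1 + SA / Sd) * Q2 < (1 - SA / Sd) * Q1 := by nlinarith [hRlt]
  linarith
end

section
/- In the 2-class logit reduction, for 0/1 visibilities concentrated on the top i positions, maximizing over permutations reduces to maximizing over subsets of size i: max_{σ ∈ S_N} ∑_{c=1}^2 w_c ∑_{ℓ=1}^N v_{σ(ℓ)} V^c_ℓ r_ℓ / (∑_j v_{σ(j)} V^c_j + 1) = max_{S ⊆ [N], |S| = i} [α ∑_{ℓ∈S} V^1_ℓ r_ℓ/(∑_{j∈S} V^1_j + 1) + (1−α) ∑_{ℓ∈S} V^2_ℓ r_ℓ/(∑_{j∈S} V^2_j + 1)], where v_j = 1 for j ≤ i and v_j = 0 for j > i, w_1 = α, w_2 = 1−α. -/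
open Finset

lemma subtypeCongr_prop_iff {α : Type*} {p q : α → Prop} [DecidablePred p] [DecidablePred q]
    (e : { x // p x } ≃ { x // q x }) (f : { x // ¬p x } ≃ { x // ¬q x }) (a : α) :
    q (Equiv.subtypeCongr e f a) ↔ p a := by
  by_cases h : p a
  · simp only [Equiv.subtypeCongr, Equiv.trans_apply, Equiv.sumCompl_symm_apply_of_pos h,
      Equiv.sumCongr_apply, Sum.map_inl, Equiv.sumCompl_apply_inl]
    exact iff_of_true (e ⟨a, h⟩).2 h
  · simp only [Equiv.subtypeCongr, Equiv.trans_apply, Equiv.sumCompl_symm_apply_of_neg h,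
      Equiv.sumCongr_apply, Sum.map_inr, Equiv.sumCompl_apply_inr]
    exact iff_of_false (f ⟨a, h⟩).2 h

/-- Key step of the NP-hardness reduction: with 0/1 visibilities concentrated
on the top `i` positions, maximizing the 2-class logit objective over
permutations equals maximizing the assortment objective over subsets of
cardinality `i`. -/
theorem perm_max_eq_subset_max
    (N : ℕ) (hN : 0 < N) (i : ℕ) (hi1 : 1 ≤ i) (hiN : i ≤ N)
    (V1 V2 r : Fin N → ℝ)
    (hV1 : ∀ ℓ, 0 ≤ V1 ℓ) (hV2 : ∀ ℓ, 0 ≤ V2 ℓ) (hr : ∀ ℓ, 0 ≤ r ℓ)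
    (α : ℝ) (hα0 : 0 ≤ α) (hα1 : α ≤ 1)
    (v : Fin N → ℝ) (hv : ∀ j, v j = if (j : ℕ) < i then 1 else 0) :
    (Finset.univ : Finset (Equiv.Perm (Fin N))).sup' Finset.univ_nonempty
        (fun σ =>
          α * (∑ ℓ : Fin N, v (σ ℓ) * V1 ℓ * r ℓ) / (∑ j : Fin N, v (σ j) * V1 j + 1)
          + (1 - α) * (∑ ℓ : Fin N, v (σ ℓ) * V2 ℓ * r ℓ) /
              (∑ j : Fin N, v (σ j) * V2 j + 1))
      = ((Finset.univ : Finset (Finset (Fin N))).filter (fun S => S.card = i)).sup'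
          (by
            obtain ⟨t, -, ht⟩ :=
              Finset.exists_subset_card_eq (s := (Finset.univ : Finset (Fin N))) (n := i) (by simpa using hiN)
            exact ⟨t, by simp [ht]⟩)
          (fun S =>
            α * (∑ ℓ ∈ S, V1 ℓ * r ℓ) / (∑ j ∈ S, V1 j + 1)
            + (1 - α) * (∑ ℓ ∈ S, V2 ℓ * r ℓ) / (∑ j ∈ S, V2 j + 1)) := by
  -- the set of top-i positions
  set T : Finset (Fin N) := univ.filter (fun j => (j : ℕ) < i) with hT
  have hTcard : T.card = i := by
    have hmap : T = Finset.map ⟨Fin.castLE hiN, Fin.castLE_injective hiN⟩ univ := by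
      ext j
      simp only [hT, mem_filter, mem_univ, true_and, Finset.mem_map, Function.Embedding.coeFn_mk]
      constructor
      · intro hj; exact ⟨⟨(j : ℕ), hj⟩, by ext; simp⟩
      · rintro ⟨k, rfl⟩; exact k.2
    simp [hmap]
  -- sums rewrite
  have key : ∀ (σ : Equiv.Perm (Fin N)) (f : Fin N → ℝ),
      ∑ ℓ : Fin N, v (σ ℓ) * f ℓ = ∑ ℓ ∈ univ.filter (fun ℓ => ((σ ℓ : Fin N) : ℕ) < i), f ℓ := by
    intro σ f
    rw [Finset.sum_filter]
    refine Finset.sum_congr rfl fun ℓ _ => ?_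
    rw [hv]
    by_cases h : ((σ ℓ : Fin N) : ℕ) < i <;> simp [h]
  have keycard : ∀ σ : Equiv.Perm (Fin N),
      (univ.filter (fun ℓ => ((σ ℓ : Fin N) : ℕ) < i)).card = i := by
    intro σ
    have himg : univ.filter (fun ℓ => ((σ ℓ : Fin N) : ℕ) < i) = T.image σ.symm := by
      ext ℓ
      simp only [mem_filter, mem_univ, true_and, Finset.mem_image, hT]
      constructor
      · intro h; exact ⟨σ ℓ, by simp [h]⟩
      · rintro ⟨j, hj, rfl⟩; simpa using hj
    rw [himg, Finset.card_image_of_injective _ σ.symm.injective, hTcard]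
  set F : Equiv.Perm (Fin N) → ℝ := fun σ =>
      α * (∑ ℓ : Fin N, v (σ ℓ) * V1 ℓ * r ℓ) / (∑ j : Fin N, v (σ j) * V1 j + 1)
      + (1 - α) * (∑ ℓ : Fin N, v (σ ℓ) * V2 ℓ * r ℓ) /
          (∑ j : Fin N, v (σ j) * V2 j + 1) with hF
  set G : Finset (Fin N) → ℝ := fun S =>
      α * (∑ ℓ ∈ S, V1 ℓ * r ℓ) / (∑ j ∈ S, V1 j + 1)
      + (1 - α) * (∑ ℓ ∈ S, V2 ℓ * r ℓ) / (∑ j ∈ S, V2 j + 1) with hG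
  have hFG : ∀ σ : Equiv.Perm (Fin N),
      F σ = G (univ.filter (fun ℓ => ((σ ℓ : Fin N) : ℕ) < i)) := by
    intro σ
    simp only [hF, hG, mul_assoc]
    rw [key σ (fun ℓ => V1 ℓ * r ℓ), key σ (fun ℓ => V2 ℓ * r ℓ), key σ V1, key σ V2]
  apply le_antisymm
  · apply Finset.sup'_le
    intro σ _
    have hmem : univ.filter (fun ℓ => ((σ ℓ : Fin N) : ℕ) < i)
        ∈ (Finset.univ : Finset (Finset (Fin N))).filter (fun S => S.card = i) := by
      simp [keycard σ]
    calc F σ = G _ := hFG σ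
    _ ≤ _ := Finset.le_sup' G hmem
  · apply Finset.sup'_le
    intro S hS
    have hScard : S.card = i := by simpa using hS
    -- build a permutation sending S to the top-i positions
    have c1 : Fintype.card {x : Fin N // x ∈ S} = Fintype.card {x : Fin N // (x : ℕ) < i} := by
      rw [Fintype.card_coe, Fintype.card_subtype, hScard]
      exact hTcard.symm
    have c2 : Fintype.card {x : Fin N // ¬ x ∈ S} = Fintype.card {x : Fin N // ¬ (x : ℕ) < i} := by
      rw [Fintype.card_subtype_compl, Fintype.card_subtype_compl, c1]
    let σ : Equiv.Perm (Fin N) :=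
      Equiv.subtypeCongr (Fintype.equivOfCardEq c1) (Fintype.equivOfCardEq c2)
    have hfilter : univ.filter (fun ℓ => ((σ ℓ : Fin N) : ℕ) < i) = S := by
      ext ℓ
      simp only [mem_filter, mem_univ, true_and]
      exact subtypeCongr_prop_iff (q := fun x : Fin N => (x : ℕ) < i) _ _ ℓ
    have : G S = F σ := by rw [hFG σ, hfilter]
    rw [this]
    exact Finset.le_sup' F (Finset.mem_univ σ)
end
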